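/- Let k be an integer, I and H multigraphs on the finite set V, U ⊆ V, and let f and P be as defined. Let x be an extreme point of P with 0 < x_e < 1 for every e ∈ E, where E ≠ ∅, and suppose that no laminar x-defining family exists. Then there are f-positive x-tight cuts A and B that cross and such that: (i) A∩B = {u} or V\(A∪B) = {u} for some u ∈ U, and (ii) A\B = {v} or B\A = {v} for some v ∈ U. -/

import Mathlib

open Finset

variable {V : Type*} [Fintype V] [DecidableEq V] {E : Type*} [Fintype E] [DecidableEq E]

/-- `d_m(S,T)`: total multiplicity of edges of the multigraph `m` with one end in `S` and
the other in `T` (for disjoint `S`, `T`). -/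
def dBetween (m : V → V → ℕ) (S T : Finset V) : ℕ := ∑ u ∈ S, ∑ v ∈ T, m u v

/-- `d_m(S) = d_m(S, V \ S)`. -/
def degS (m : V → V → ℕ) (S : Finset V) : ℕ := dBetween m S Sᶜ

/-- Edges of the edge-indexed multigraph `(V, E)` (endpoint map `ends`) with exactly one
endpoint in `S`. -/
def cutEdges (ends : E → V × V) (S : Finset V) : Finset E :=
  univ.filter fun e => ((ends e).1 ∈ S ∧ (ends e).2 ∉ S) ∨ ((ends e).1 ∉ S ∧ (ends e).2 ∈ S)

/-- A cut is a nonempty proper subset of `V`. -/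
def IsCut (S : Finset V) : Prop := S.Nonempty ∧ S ≠ univ

/-- The relaxed residual function `f`:
`f(S) = k - d_I(S) - 2 d_H(S) - 2` if `S = {u}` or `V \ S = {u}` for some `u ∈ U`,
and `f(S) = k - d_I(S) - 2 d_H(S)` otherwise. -/
def fRes (k : ℤ) (I H : V → V → ℕ) (U : Finset V) (S : Finset V) : ℤ :=
  if ∃ u ∈ U, S = {u} ∨ Sᶜ = {u} then
    k - (degS I S : ℤ) - 2 * (degS H S : ℤ) - 2
  else
    k - (degS I S : ℤ) - 2 * (degS H S : ℤ)

/-- The polytope `P = {x ∈ [0,1]^E : x(δ_E(S)) ≥ f(S) for every cut S}`. -/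
def polyP (k : ℤ) (I H : V → V → ℕ) (U : Finset V) (ends : E → V × V) : Set (E → ℝ) :=
  {x | (∀ e, 0 ≤ x e ∧ x e ≤ 1) ∧
    ∀ S : Finset V, IsCut S → (fRes k I H U S : ℝ) ≤ ∑ e ∈ cutEdges ends S, x e}

/-- A set `S` is `x`-tight if `x(δ_E(S)) = f(S)`. -/
def IsTight (k : ℤ) (I H : V → V → ℕ) (U : Finset V) (ends : E → V × V) (x : E → ℝ)
    (S : Finset V) : Prop :=
  ∑ e ∈ cutEdges ends S, x e = (fRes k I H U S : ℝ)

/-- An `x`-core: an inclusion-minimal `f`-positive `x`-tight cut. -/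
def IsCore (k : ℤ) (I H : V → V → ℕ) (U : Finset V) (ends : E → V × V) (x : E → ℝ)
    (C : Finset V) : Prop :=
  IsCut C ∧ 0 < fRes k I H U C ∧ IsTight k I H U ends x C ∧
    ∀ C' : Finset V, C' ⊂ C → IsCut C' → 0 < fRes k I H U C' →
      IsTight k I H U ends x C' → False

/-- The incidence vector `χ_{δ_E(S)} ∈ ℝ^E` of the cut edge set `δ_E(S)`. -/
def chiCut (ends : E → V × V) (S : Finset V) : E → ℝ :=
  fun e => if e ∈ cutEdges ends S then 1 else 0

/-- A family of sets is laminar if any two members are either disjoint or nested. -/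
def LaminarF {V : Type*} (F : Finset (Finset V)) : Prop :=
  ∀ A ∈ F, ∀ B ∈ F, Disjoint A B ∨ A ⊆ B ∨ B ⊆ A

/-- An `x`-defining family: a family `L` of `f`-positive `x`-tight cuts with `|L| = |E|`
whose incidence vectors `χ_{δ_E(S)}`, `S ∈ L`, are linearly independent. -/
def IsDefining (k : ℤ) (I H : V → V → ℕ) (U : Finset V) (ends : E → V × V) (x : E → ℝ)
    (L : Finset (Finset V)) : Prop :=
  (∀ S ∈ L, IsCut S ∧ 0 < fRes k I H U S ∧ IsTight k I H U ends x S) ∧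
  L.card = Fintype.card E ∧
  LinearIndependent ℝ (fun S : {A : Finset V // A ∈ L} => chiCut ends S.1)

/-- Cuts `A`, `B` cross if `A ∩ B`, `A \ B`, `B \ A` and `V \ (A ∪ B)` are all nonempty. -/
def Crosses (A B : Finset V) : Prop :=
  (A ∩ B).Nonempty ∧ (A \ B).Nonempty ∧ (B \ A).Nonempty ∧ ((A ∪ B)ᶜ).Nonempty

set_option linter.unusedSectionVars false
set_option maxHeartbeats 1000000

/-- crossing indicator -/
def xind (S : Finset V) (a b : V) : ℕ :=
  if (a ∈ S ∧ b ∉ S) ∨ (a ∉ S ∧ b ∈ S) then 1 else 0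

lemma xind_submod (A B : Finset V) (a b : V) :
    xind (A ∩ B) a b + xind (A ∪ B) a b ≤ xind A a b + xind B a b := by
  by_cases h1 : a ∈ A <;> by_cases h2 : a ∈ B <;> by_cases h3 : b ∈ A <;> by_cases h4 : b ∈ B <;>
    simp [xind, mem_inter, mem_union, h1, h2, h3, h4]

lemma xind_posimod (A B : Finset V) (a b : V) :
    xind (A \ B) a b + xind (B \ A) a b ≤ xind A a b + xind B a b := by
  by_cases h1 : a ∈ A <;> by_cases h2 : a ∈ B <;> by_cases h3 : b ∈ A <;> by_cases h4 : b ∈ B <;>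
    simp [xind, mem_sdiff, h1, h2, h3, h4]

lemma xind_compl (S : Finset V) (a b : V) : xind Sᶜ a b = xind S a b := by
  by_cases h1 : a ∈ S <;> by_cases h2 : b ∈ S <;>
    simp [xind, mem_compl, h1, h2, or_comm]

lemma mem_cutEdges_iff (ends : E → V × V) (S : Finset V) (e : E) :
    e ∈ cutEdges ends S ↔ xind S (ends e).1 (ends e).2 = 1 := by
  simp only [cutEdges, mem_filter, mem_univ, true_and, xind]
  split <;> simp_all

lemma degS_eq (m : V → V → ℕ) (S : Finset V) :
    degS m S = ∑ a : V, ∑ b : V, m a b * (if a ∈ S ∧ b ∉ S then 1 else 0) := by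
  unfold degS dBetween
  have h : ∀ a b : V, m a b * (if a ∈ S ∧ b ∉ S then 1 else 0)
      = if a ∈ S then (if b ∈ Sᶜ then m a b else 0) else 0 := by
    intro a b
    by_cases h1 : a ∈ S <;> by_cases h2 : b ∈ S <;> simp [h1, h2]
  simp only [h]
  have h2 : ∀ a : V, (∑ b : V, if a ∈ S then (if b ∈ Sᶜ then m a b else 0) else 0)
      = if a ∈ S then (∑ b : V, if b ∈ Sᶜ then m a b else 0) else 0 := by
    intro a; split <;> simp
  simp only [h2]
  rw [Finset.sum_ite_mem univ S, univ_inter]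
  refine Finset.sum_congr rfl fun a _ => ?_
  rw [Finset.sum_ite_mem univ Sᶜ, univ_inter]

lemma twice_degS (m : V → V → ℕ) (hm : ∀ a b, m a b = m b a) (S : Finset V) :
    2 * degS m S = ∑ a : V, ∑ b : V, m a b * xind S a b := by
  have h : ∀ a b : V, m a b * xind S a b
      = m a b * (if a ∈ S ∧ b ∉ S then 1 else 0) + m a b * (if b ∈ S ∧ a ∉ S then 1 else 0) := by
    intro a b
    by_cases h1 : a ∈ S <;> by_cases h2 : b ∈ S <;> simp [xind, h1, h2]
  simp only [h, Finset.sum_add_distrib]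
  rw [two_mul]
  congr 1
  · exact degS_eq m S
  · rw [degS_eq m S, Finset.sum_comm]
    refine Finset.sum_congr rfl fun a _ => Finset.sum_congr rfl fun b _ => ?_
    rw [hm a b]

lemma degS_submod (m : V → V → ℕ) (hm : ∀ a b, m a b = m b a) (A B : Finset V) :
    degS m (A ∩ B) + degS m (A ∪ B) ≤ degS m A + degS m B := by
  have h2 : 2 * (degS m (A ∩ B) + degS m (A ∪ B)) ≤ 2 * (degS m A + degS m B) := by
    rw [mul_add, mul_add, twice_degS m hm, twice_degS m hm, twice_degS m hm, twice_degS m hm,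
      ← Finset.sum_add_distrib, ← Finset.sum_add_distrib]
    refine Finset.sum_le_sum fun a _ => ?_
    rw [← Finset.sum_add_distrib, ← Finset.sum_add_distrib]
    refine Finset.sum_le_sum fun b _ => ?_
    rw [← Nat.mul_add, ← Nat.mul_add]
    refine Nat.mul_le_mul_left _ ?_
    by_cases h1 : a ∈ A <;> by_cases h2 : a ∈ B <;> by_cases h3 : b ∈ A <;> by_cases h4 : b ∈ B <;>
      simp [xind, mem_inter, mem_union, h1, h2, h3, h4]
  omega

lemma degS_posimod (m : V → V → ℕ) (hm : ∀ a b, m a b = m b a) (A B : Finset V) :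
    degS m (A \ B) + degS m (B \ A) ≤ degS m A + degS m B := by
  have h2 : 2 * (degS m (A \ B) + degS m (B \ A)) ≤ 2 * (degS m A + degS m B) := by
    rw [mul_add, mul_add, twice_degS m hm, twice_degS m hm, twice_degS m hm, twice_degS m hm,
      ← Finset.sum_add_distrib, ← Finset.sum_add_distrib]
    refine Finset.sum_le_sum fun a _ => ?_
    rw [← Finset.sum_add_distrib, ← Finset.sum_add_distrib]
    refine Finset.sum_le_sum fun b _ => ?_
    rw [← Nat.mul_add, ← Nat.mul_add]
    refine Nat.mul_le_mul_left _ ?_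
    by_cases h1 : a ∈ A <;> by_cases h2 : a ∈ B <;> by_cases h3 : b ∈ A <;> by_cases h4 : b ∈ B <;>
      simp [xind, mem_sdiff, h1, h2, h3, h4]
  omega

lemma degS_compl (m : V → V → ℕ) (hm : ∀ a b, m a b = m b a) (S : Finset V) :
    degS m Sᶜ = degS m S := by
  have h : 2 * degS m Sᶜ = 2 * degS m S := by
    rw [twice_degS m hm, twice_degS m hm]
    refine Finset.sum_congr rfl fun a _ => Finset.sum_congr rfl fun b _ => ?_
    congr 1
    by_cases h1 : a ∈ S <;> by_cases h2 : b ∈ S <;> simp [xind, mem_compl, h1, h2, or_comm]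
  omega

lemma chiCut_eq (ends : E → V × V) (S : Finset V) (e : E) :
    chiCut ends S e = (xind S (ends e).1 (ends e).2 : ℝ) := by
  rw [chiCut]
  by_cases h : e ∈ cutEdges ends S
  · rw [if_pos h, (mem_cutEdges_iff ends S e).mp h]; norm_num
  · rw [if_neg h]
    have : xind S (ends e).1 (ends e).2 = 0 := by
      rw [mem_cutEdges_iff] at h
      unfold xind at h ⊢; split at h <;> simp_all [xind]
    rw [this]; norm_num

lemma cutEdges_compl (ends : E → V × V) (S : Finset V) :
    cutEdges ends Sᶜ = cutEdges ends S := by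
  ext e; simp only [cutEdges, mem_filter, mem_univ, true_and, mem_compl]
  tauto

lemma sum_cut_eq (ends : E → V × V) (x : E → ℝ) (S : Finset V) :
    ∑ e ∈ cutEdges ends S, x e = ∑ e : E, (xind S (ends e).1 (ends e).2 : ℝ) * x e := by
  rw [cutEdges, Finset.sum_filter]
  refine Finset.sum_congr rfl fun e _ => ?_
  by_cases h : ((ends e).1 ∈ S ∧ (ends e).2 ∉ S) ∨ ((ends e).1 ∉ S ∧ (ends e).2 ∈ S)
  · rw [if_pos h]
    have : xind S (ends e).1 (ends e).2 = 1 := by rw [xind, if_pos h]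
    rw [this]; norm_num
  · rw [if_neg h]
    have : xind S (ends e).1 (ends e).2 = 0 := by rw [xind, if_neg h]
    rw [this]; norm_num


lemma sum_cut_pair_le (ends : E → V × V) (x : E → ℝ) (hx : ∀ e, 0 ≤ x e)
    {A B C D : Finset V}
    (hpt : ∀ a b, xind C a b + xind D a b ≤ xind A a b + xind B a b) :
    ∑ e ∈ cutEdges ends C, x e + ∑ e ∈ cutEdges ends D, x e
      ≤ ∑ e ∈ cutEdges ends A, x e + ∑ e ∈ cutEdges ends B, x e := by
  rw [sum_cut_eq, sum_cut_eq, sum_cut_eq, sum_cut_eq, ← Finset.sum_add_distrib,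
    ← Finset.sum_add_distrib]
  refine Finset.sum_le_sum fun e _ => ?_
  rw [← add_mul, ← add_mul]
  refine mul_le_mul_of_nonneg_right ?_ (hx e)
  have := hpt (ends e).1 (ends e).2
  push_cast
  exact_mod_cast this

lemma chi_eq_of_sum_eq (ends : E → V × V) (x : E → ℝ) (hx : ∀ e, 0 < x e)
    {A B C D : Finset V}
    (hpt : ∀ a b, xind C a b + xind D a b ≤ xind A a b + xind B a b)
    (heq : ∑ e ∈ cutEdges ends C, x e + ∑ e ∈ cutEdges ends D, x e
      = ∑ e ∈ cutEdges ends A, x e + ∑ e ∈ cutEdges ends B, x e) :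
    ∀ e, chiCut ends A e + chiCut ends B e = chiCut ends C e + chiCut ends D e := by
  have key : ∀ e : E, ((xind A (ends e).1 (ends e).2 + xind B (ends e).1 (ends e).2 : ℕ) : ℝ) * x e
      - ((xind C (ends e).1 (ends e).2 + xind D (ends e).1 (ends e).2 : ℕ) : ℝ) * x e = 0 := by
    have hsum : ∑ e : E, (((xind A (ends e).1 (ends e).2 + xind B (ends e).1 (ends e).2 : ℕ) : ℝ) * x e
        - ((xind C (ends e).1 (ends e).2 + xind D (ends e).1 (ends e).2 : ℕ) : ℝ) * x e) = 0 := by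
      rw [Finset.sum_sub_distrib]
      have h1 := sum_cut_eq ends x A
      have h2 := sum_cut_eq ends x B
      have h3 := sum_cut_eq ends x C
      have h4 := sum_cut_eq ends x D
      push_cast
      simp only [add_mul]
      rw [Finset.sum_add_distrib, Finset.sum_add_distrib, ← h1, ← h2, ← h3, ← h4]
      linarith
    intro e
    have hnn : ∀ e ∈ (univ : Finset E),
        0 ≤ ((xind A (ends e).1 (ends e).2 + xind B (ends e).1 (ends e).2 : ℕ) : ℝ) * x e
        - ((xind C (ends e).1 (ends e).2 + xind D (ends e).1 (ends e).2 : ℕ) : ℝ) * x e := by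
      intro e _
      rw [← sub_mul]
      refine mul_nonneg ?_ (le_of_lt (hx e))
      have := hpt (ends e).1 (ends e).2
      rw [sub_nonneg]
      exact_mod_cast this
    exact (Finset.sum_eq_zero_iff_of_nonneg hnn).mp hsum e (mem_univ e)
  intro e
  have h := key e
  rw [← sub_mul] at h
  rcases mul_eq_zero.mp h with h' | h'
  · rw [chiCut_eq, chiCut_eq, chiCut_eq, chiCut_eq]
    have : ((xind A (ends e).1 (ends e).2 + xind B (ends e).1 (ends e).2 : ℕ) : ℝ)
        = ((xind C (ends e).1 (ends e).2 + xind D (ends e).1 (ends e).2 : ℕ) : ℝ) := by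
      linarith [sub_eq_zero.mp h']
    push_cast at this ⊢
    linarith
  · exact absurd h' (ne_of_gt (hx e))

def gRes (k : ℤ) (I H : V → V → ℕ) (S : Finset V) : ℤ :=
  k - (degS I S : ℤ) - 2 * (degS H S : ℤ)


lemma fRes_eq_gRes {k : ℤ} {I H : V → V → ℕ} {U : Finset V} {S : Finset V}
    (h : ¬ ∃ u ∈ U, S = {u} ∨ Sᶜ = {u}) : fRes k I H U S = gRes k I H S := by
  rw [fRes, if_neg h]; rfl

lemma fRes_le_gRes (k : ℤ) (I H : V → V → ℕ) (U : Finset V) (S : Finset V) :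
    fRes k I H U S ≤ gRes k I H S := by
  rw [fRes]; split <;> [skip; rfl] <;> simp [gRes] <;> omega

lemma gRes_submod (k : ℤ) (I H : V → V → ℕ) (hI : ∀ a b, I a b = I b a)
    (hH : ∀ a b, H a b = H b a) (A B : Finset V) :
    gRes k I H A + gRes k I H B ≤ gRes k I H (A ∩ B) + gRes k I H (A ∪ B) := by
  have h1 := degS_submod I hI A B
  have h2 := degS_submod H hH A B
  unfold gRes; omega

lemma gRes_posimod (k : ℤ) (I H : V → V → ℕ) (hI : ∀ a b, I a b = I b a)
    (hH : ∀ a b, H a b = H b a) (A B : Finset V) :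
    gRes k I H A + gRes k I H B ≤ gRes k I H (A \ B) + gRes k I H (B \ A) := by
  have h1 := degS_posimod I hI A B
  have h2 := degS_posimod H hH A B
  unfold gRes; omega

lemma fRes_compl (k : ℤ) (I H : V → V → ℕ) (hI : ∀ a b, I a b = I b a)
    (hH : ∀ a b, H a b = H b a) (U : Finset V) (S : Finset V) :
    fRes k I H U Sᶜ = fRes k I H U S := by
  rw [fRes, fRes, degS_compl I hI, degS_compl H hH]
  by_cases hc : ∃ u ∈ U, S = {u} ∨ Sᶜ = {u}
  · have hc' : ∃ u ∈ U, Sᶜ = {u} ∨ Sᶜᶜ = {u} := by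
      rw [compl_compl]
      obtain ⟨u, hu, h⟩ := hc
      exact ⟨u, hu, h.symm⟩
    rw [if_pos hc', if_pos hc]
  · have hc' : ¬ ∃ u ∈ U, Sᶜ = {u} ∨ Sᶜᶜ = {u} := by
      rw [compl_compl]
      intro ⟨u, hu, h⟩
      exact hc ⟨u, hu, h.symm⟩
    rw [if_neg hc', if_neg hc]

lemma isCut_compl {S : Finset V} (h : IsCut S) : IsCut Sᶜ := by
  obtain ⟨h1, h2⟩ := h
  refine ⟨?_, (Finset.compl_ne_univ_iff_nonempty S).mpr h1⟩
  by_contra hne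
  rw [Finset.not_nonempty_iff_eq_empty] at hne
  apply h2
  have := congrArg (·ᶜ) hne
  simpa using this

lemma ne_singleton_of_two {T : Finset V} {a b : V} (ha : a ∈ T) (hb : b ∈ T) (hab : a ≠ b) :
    ∀ u : V, T ≠ {u} := by
  intro u h
  rw [h, Finset.mem_singleton] at ha hb
  exact hab (ha.trans hb.symm)

lemma crosses_symm {A B : Finset V} (h : Crosses A B) : Crosses B A := by
  obtain ⟨h1, h2, h3, h4⟩ := h
  exact ⟨by rwa [Finset.inter_comm], h3, h2, by rwa [Finset.union_comm]⟩

lemma not_crosses_of_subset {A B : Finset V} (h : A ⊆ B) : ¬ Crosses A B := by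
  rintro ⟨-, h2, -, -⟩
  exact h2.ne_empty (Finset.sdiff_eq_empty_iff_subset.mpr h)

lemma not_crosses_of_subset' {A B : Finset V} (h : B ⊆ A) : ¬ Crosses A B := by
  rintro ⟨-, -, h3, -⟩
  exact h3.ne_empty (Finset.sdiff_eq_empty_iff_subset.mpr h)

lemma not_crosses_of_disjoint {A B : Finset V} (h : Disjoint A B) : ¬ Crosses A B := by
  rintro ⟨h1, -, -, -⟩
  exact h1.ne_empty (Finset.disjoint_iff_inter_eq_empty.mp h)

instance decCrosses (A B : Finset V) : Decidable (Crosses A B) :=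
  decidable_of_iff ((A ∩ B).Nonempty ∧ (A \ B).Nonempty ∧ (B \ A).Nonempty ∧ ((A ∪ B)ᶜ).Nonempty)
    (by rw [Crosses])

lemma not_crosses_of_rel {A B : Finset V} (h : Disjoint A B ∨ A ⊆ B ∨ B ⊆ A) :
    ¬ Crosses A B := by
  rintro ⟨h1, h2, h3, -⟩
  rcases h with h | h | h
  · exact h1.ne_empty (Finset.disjoint_iff_inter_eq_empty.mp h)
  · exact h2.ne_empty (Finset.sdiff_eq_empty_iff_subset.mpr h)
  · exact h3.ne_empty (Finset.sdiff_eq_empty_iff_subset.mpr h)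

lemma rel_of_not_crosses {A B : Finset V} {r : V} (hra : r ∉ A) (hrb : r ∉ B)
    (h : ¬ Crosses A B) : Disjoint A B ∨ A ⊆ B ∨ B ⊆ A := by
  rw [Crosses] at h
  push_neg at h
  by_cases h1 : (A ∩ B).Nonempty
  · by_cases h2 : (A \ B).Nonempty
    · by_cases h3 : (B \ A).Nonempty
      · exfalso
        have h4 := h h1 h2 h3
        have : r ∈ (A ∪ B)ᶜ := by simp [hra, hrb]
        rw [h4] at this; exact absurd this (Finset.notMem_empty r)
      · right; right
        rw [Finset.not_nonempty_iff_eq_empty, Finset.sdiff_eq_empty_iff_subset] at h3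
        exact h3
    · right; left
      rw [Finset.not_nonempty_iff_eq_empty, Finset.sdiff_eq_empty_iff_subset] at h2
      exact h2
  · left
    rw [Finset.not_nonempty_iff_eq_empty] at h1
    exact Finset.disjoint_iff_inter_eq_empty.mpr h1

lemma rel_uncross {A S B : Finset V}
    (hAS : Crosses A S)
    (hBA : Disjoint B A ∨ B ⊆ A ∨ A ⊆ B)
    (hBS : Disjoint B S ∨ B ⊆ S ∨ S ⊆ B) :
    (Disjoint B (A ∩ S) ∨ B ⊆ A ∩ S ∨ A ∩ S ⊆ B) ∧
    (Disjoint B (A ∪ S) ∨ B ⊆ A ∪ S ∨ A ∪ S ⊆ B) ∧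
    (Disjoint B (A \ S) ∨ B ⊆ A \ S ∨ A \ S ⊆ B) ∧
    (Disjoint B (S \ A) ∨ B ⊆ S \ A ∨ S \ A ⊆ B) := by
  obtain ⟨hne1, hne2, hne3, -⟩ := hAS
  rcases hBA with hBA | hBA | hBA <;> rcases hBS with hBS | hBS | hBS
  · exact ⟨Or.inl (hBA.mono_right inter_subset_left),
      Or.inl (Finset.disjoint_union_right.mpr ⟨hBA, hBS⟩),
      Or.inl (hBA.mono_right sdiff_subset),
      Or.inl (hBS.mono_right sdiff_subset)⟩
  · refine ⟨Or.inl (hBA.mono_right inter_subset_left),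
      Or.inr (Or.inl (hBS.trans subset_union_right)),
      Or.inl (hBA.mono_right sdiff_subset),
      Or.inr (Or.inl ?_)⟩
    intro b hb
    exact Finset.mem_sdiff.mpr ⟨hBS hb, fun hbA => Finset.disjoint_left.mp hBA hb hbA⟩
  · exfalso
    obtain ⟨a, ha⟩ := hne1
    rw [Finset.mem_inter] at ha
    exact Finset.disjoint_left.mp hBA (hBS ha.2) ha.1
  · refine ⟨Or.inl (hBS.mono_right inter_subset_right),
      Or.inr (Or.inl (hBA.trans subset_union_left)),
      Or.inr (Or.inl ?_),
      Or.inl (hBS.mono_right sdiff_subset)⟩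
    intro b hb
    exact Finset.mem_sdiff.mpr ⟨hBA hb, fun hbS => Finset.disjoint_left.mp hBS hb hbS⟩
  · exact ⟨Or.inr (Or.inl (Finset.subset_inter hBA hBS)),
      Or.inr (Or.inl (hBA.trans subset_union_left)),
      Or.inl (disjoint_sdiff.mono_left hBS),
      Or.inl (disjoint_sdiff.mono_left hBA)⟩
  · exfalso
    obtain ⟨a, ha⟩ := hne3
    rw [Finset.mem_sdiff] at ha
    exact ha.2 (hBA (hBS ha.1))
  · exfalso
    obtain ⟨a, ha⟩ := hne1
    rw [Finset.mem_inter] at ha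
    exact Finset.disjoint_left.mp hBS (hBA ha.1) ha.2
  · exfalso
    obtain ⟨a, ha⟩ := hne2
    rw [Finset.mem_sdiff] at ha
    exact ha.2 (hBS (hBA ha.1))
  · exact ⟨Or.inr (Or.inr (inter_subset_left.trans hBA)),
      Or.inr (Or.inr (Finset.union_subset hBA hBS)),
      Or.inr (Or.inr (sdiff_subset.trans hBA)),
      Or.inr (Or.inr (sdiff_subset.trans hBS))⟩

lemma span_tight_eq_top (k : ℤ) (I H : V → V → ℕ) (U : Finset V) (ends : E → V × V)
    [Nonempty E] (x : E → ℝ) (hx : x ∈ (polyP k I H U ends).extremePoints ℝ)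
    (hxe : ∀ e, 0 < x e ∧ x e < 1) :
    Submodule.span ℝ (chiCut ends ''
      {S : Finset V | IsCut S ∧ IsTight k I H U ends x S}) = ⊤ := by
  classical
  by_contra hW
  set T : Set (Finset V) := {S : Finset V | IsCut S ∧ IsTight k I H U ends x S} with hT
  set W := Submodule.span ℝ (chiCut ends '' T) with hWdef
  have hWlt : W < ⊤ := lt_top_iff_ne_top.mpr hW
  obtain ⟨φ, hφne, hφ⟩ := Submodule.exists_dual_map_eq_bot_of_lt_top hWlt inferInstance
  set d : E → ℝ := fun e => φ (fun j => if e = j then 1 else 0) with hd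
  have hrep : ∀ y : E → ℝ, φ y = ∑ e : E, y e * d e := by
    intro y
    conv_lhs => rw [pi_eq_sum_univ y]
    rw [map_sum]
    refine Finset.sum_congr rfl fun e _ => ?_
    rw [map_smul, smul_eq_mul, hd]
  have hker : ∀ w ∈ W, φ w = 0 := by
    intro w hw
    have h1 : φ w ∈ Submodule.map φ W := Submodule.mem_map_of_mem hw
    rw [hφ] at h1
    exact (Submodule.mem_bot ℝ).mp h1
  have hd0 : ∀ S ∈ T, ∑ e ∈ cutEdges ends S, d e = 0 := by
    intro S hS
    have hmem : chiCut ends S ∈ W := Submodule.subset_span ⟨S, hS, rfl⟩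
    have h0 := hker _ hmem
    rw [hrep] at h0
    rw [← h0]
    rw [cutEdges, Finset.sum_filter]
    refine Finset.sum_congr rfl fun e _ => ?_
    rw [chiCut]
    by_cases h : e ∈ cutEdges ends S
    · rw [if_pos h, one_mul, if_pos]
      simpa [cutEdges] using h
    · rw [if_neg h, zero_mul, if_neg]
      simpa [cutEdges] using h
  have hdne : d ≠ 0 := by
    intro h0
    apply hφne
    apply LinearMap.ext
    intro y
    rw [hrep, h0]
    simp
  -- bounds
  set M : ℝ := ∑ e : E, |d e| with hM
  have hM0 : 0 ≤ M := Finset.sum_nonneg fun e _ => abs_nonneg _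
  have hMd : ∀ e, |d e| ≤ M := fun e =>
    Finset.single_le_sum (f := fun e => |d e|) (fun e _ => abs_nonneg _) (mem_univ e)
  have hMcut : ∀ S : Finset V, |∑ e ∈ cutEdges ends S, d e| ≤ M := by
    intro S
    calc |∑ e ∈ cutEdges ends S, d e| ≤ ∑ e ∈ cutEdges ends S, |d e| :=
          Finset.abs_sum_le_sum_abs _ _
      _ ≤ M := Finset.sum_le_sum_of_subset_of_nonneg (Finset.subset_univ _)
          (fun e _ _ => abs_nonneg _)
  -- epsilon
  set a : ℝ := (univ.image (fun e : E => min (x e) (1 - x e))).min' (by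
    simp [Finset.image_nonempty]) with ha
  have ha0 : 0 < a := by
    rw [ha]
    apply Finset.lt_min'_iff _ _ |>.mpr
    intro y hy
    simp only [Finset.mem_image] at hy
    obtain ⟨e, -, rfl⟩ := hy
    exact lt_min (hxe e).1 (by linarith [(hxe e).2])
  have hax : ∀ e, a ≤ x e ∧ a ≤ 1 - x e := by
    intro e
    constructor
    · exact le_trans (Finset.min'_le _ _ (Finset.mem_image_of_mem _ (mem_univ e)))
        (min_le_left _ _)
    · exact le_trans (Finset.min'_le _ _ (Finset.mem_image_of_mem _ (mem_univ e)))
        (min_le_right _ _)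
  set slack : Finset V → ℝ := fun S => (∑ e ∈ cutEdges ends S, x e) - (fRes k I H U S : ℝ)
    with hslack
  set N : Finset (Finset V) :=
    univ.filter (fun S => IsCut S ∧ ¬ IsTight k I H U ends x S) with hN
  set c : ℝ := (insert a (N.image slack)).min' (Finset.insert_nonempty _ _) with hc
  have hxP : x ∈ polyP k I H U ends := hx.1
  have hc0 : 0 < c := by
    rw [hc]
    apply Finset.lt_min'_iff _ _ |>.mpr
    intro y hy
    rw [Finset.mem_insert] at hy
    rcases hy with rfl | hy
    · exact ha0
    · simp only [Finset.mem_image, hN, Finset.mem_filter] at hy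
      obtain ⟨S, ⟨-, hcut, hnt⟩, rfl⟩ := hy
      have := hxP.2 S hcut
      rw [hslack]
      simp only [sub_pos]
      cases lt_or_eq_of_le this with
      | inl h => exact h
      | inr h => exact absurd h.symm hnt
  have hca : c ≤ a := Finset.min'_le _ _ (Finset.mem_insert_self _ _)
  have hcs : ∀ S, IsCut S → ¬ IsTight k I H U ends x S → c ≤ slack S := by
    intro S h1 h2
    exact Finset.min'_le _ _ (Finset.mem_insert_of_mem
      (Finset.mem_image_of_mem _ (by simp [hN, h1, h2])))
  set ε : ℝ := c / (M + 1) with hε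
  have hε0 : 0 < ε := div_pos hc0 (by linarith)
  have hεM : ε * M ≤ c := by
    rw [hε, div_mul_eq_mul_div, div_le_iff₀ (by linarith)]
    nlinarith
  -- membership of perturbations
  have hmem : ∀ s : ℝ, |s| ≤ ε → (fun e => x e + s * d e) ∈ polyP k I H U ends := by
    intro s hs
    constructor
    · intro e
      have h1 : |s * d e| ≤ ε * M := by
        rw [abs_mul]
        exact mul_le_mul hs (hMd e) (abs_nonneg _) (le_of_lt hε0)
      have h2 : |s * d e| ≤ a := le_trans h1 (le_trans hεM hca)
      have h3 := abs_le.mp h2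
      constructor
      · show (0:ℝ) ≤ x e + s * d e
        linarith [(hax e).1]
      · show x e + s * d e ≤ 1
        linarith [(hax e).2]
    · intro S hcut
      rw [Finset.sum_add_distrib]
      have : ∑ e ∈ cutEdges ends S, s * d e = s * ∑ e ∈ cutEdges ends S, d e := by
        rw [Finset.mul_sum]
      rw [this]
      by_cases ht : IsTight k I H U ends x S
      · have h0 := hd0 S ⟨hcut, ht⟩
        rw [h0, mul_zero, add_zero, ht]
      · have h1 : |s * ∑ e ∈ cutEdges ends S, d e| ≤ ε * M := by
          rw [abs_mul]
          exact mul_le_mul hs (hMcut S) (abs_nonneg _) (le_of_lt hε0)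
        have h2 := le_trans h1 (le_trans hεM (hcs S hcut ht))
        have := abs_le.mp h2
        rw [hslack] at this
        simp only at this
        linarith [this.1]
  -- contradiction with extremality
  have hy1 := hmem ε (by rw [abs_of_pos hε0])
  have hy2 := hmem (-ε) (by rw [abs_neg, abs_of_pos hε0])
  have hseg : x ∈ openSegment ℝ (fun e => x e + ε * d e) (fun e => x e + (-ε) * d e) := by
    refine ⟨1/2, 1/2, by norm_num, by norm_num, by norm_num, ?_⟩
    funext e
    simp only [Pi.add_apply, Pi.smul_apply, smul_eq_mul]
    ring
  rw [mem_extremePoints] at hx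
  have := (hx.2 _ hy1 _ hy2 hseg).1
  have hcontr : ∀ e, x e + ε * d e = x e := fun e => congrFun this e
  apply hdne
  funext e
  have := hcontr e
  have : ε * d e = 0 := by linarith
  rcases mul_eq_zero.mp this with h | h
  · exact absurd h (ne_of_gt hε0)
  · exact h


lemma ne_univ_of_not_mem {T : Finset V} {a : V} (h : a ∉ T) : T ≠ univ :=
  fun he => h (he ▸ mem_univ a)

lemma uncross_step (k : ℤ) (I H : V → V → ℕ)
    (hI : ∀ a b, I a b = I b a) (hH : ∀ a b, H a b = H b a)
    (U : Finset V) (ends : E → V × V) (x : E → ℝ)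
    (hxP : x ∈ polyP k I H U ends) (hxe : ∀ e, 0 < x e)
    {A S : Finset V} (hAS : Crosses A S)
    (htA : IsTight k I H U ends x A) (htS : IsTight k I H U ends x S)
    (hne : ¬((∃ u ∈ U, A ∩ S = {u} ∨ (A ∪ S)ᶜ = {u}) ∧
             (∃ v ∈ U, A \ S = {v} ∨ S \ A = {v}))) :
    (IsCut (A ∩ S) ∧ IsCut (A ∪ S) ∧ IsTight k I H U ends x (A ∩ S) ∧
      IsTight k I H U ends x (A ∪ S) ∧
      ∀ e, chiCut ends A e + chiCut ends S e
        = chiCut ends (A ∩ S) e + chiCut ends (A ∪ S) e)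
    ∨ (IsCut (A \ S) ∧ IsCut (S \ A) ∧ IsTight k I H U ends x (A \ S) ∧
      IsTight k I H U ends x (S \ A) ∧
      ∀ e, chiCut ends A e + chiCut ends S e
        = chiCut ends (A \ S) e + chiCut ends (S \ A) e) := by
  obtain ⟨hne1, hne2, hne3, hne4⟩ := hAS
  obtain ⟨a, ha⟩ := hne1
  obtain ⟨b, hb⟩ := hne2
  obtain ⟨c, hc⟩ := hne3
  obtain ⟨d, hd⟩ := hne4
  rw [Finset.mem_inter] at ha
  rw [Finset.mem_sdiff] at hb hc
  rw [Finset.mem_compl, Finset.mem_union] at hd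
  push_neg at hd
  -- basic distinctness and membership facts
  have hab : a ≠ b := fun h => hb.2 (h ▸ ha.2)
  have hac : a ≠ c := fun h => hc.2 (h ▸ ha.1)
  have had : a ≠ d := fun h => hd.1 (h ▸ ha.1)
  have hbc : b ≠ c := fun h => hc.2 (h ▸ hb.1)
  have hbd : b ≠ d := fun h => hd.1 (h ▸ hb.1)
  have hcd : c ≠ d := fun h => hd.2 (h ▸ hc.1)
  -- f = g for A and S
  have hfA : fRes k I H U A = gRes k I H A := by
    apply fRes_eq_gRes
    rintro ⟨u, -, h | h⟩
    · exact ne_singleton_of_two ha.1 hb.1 hab u h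
    · exact ne_singleton_of_two (Finset.mem_compl.mpr hc.2) (Finset.mem_compl.mpr hd.1) hcd u h
  have hfS : fRes k I H U S = gRes k I H S := by
    apply fRes_eq_gRes
    rintro ⟨u, -, h | h⟩
    · exact ne_singleton_of_two ha.2 hc.1 hac u h
    · exact ne_singleton_of_two (Finset.mem_compl.mpr hb.2) (Finset.mem_compl.mpr hd.2) hbd u h
  have hxnn : ∀ e, 0 ≤ x e := fun e => le_of_lt (hxe e)
  rw [not_and_or] at hne
  rcases hne with hne | hne
  · -- intersection / union route
    left
    have hcut1 : IsCut (A ∩ S) := by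
      exact ⟨⟨a, Finset.mem_inter.mpr ha⟩, ne_univ_of_not_mem (a := d)
        (by rw [Finset.mem_inter]; tauto)⟩
    have hcut2 : IsCut (A ∪ S) := by
      exact ⟨⟨a, Finset.mem_union_left _ ha.1⟩, ne_univ_of_not_mem (a := d)
        (by rw [Finset.mem_union]; tauto)⟩
    have hf1 : fRes k I H U (A ∩ S) = gRes k I H (A ∩ S) := by
      apply fRes_eq_gRes
      rintro ⟨u, hu, h | h⟩
      · exact hne ⟨u, hu, Or.inl h⟩
      · refine ne_singleton_of_two (a := b) (b := c) ?_ ?_ hbc u h <;>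
          rw [Finset.mem_compl, Finset.mem_inter] <;> tauto
    have hf2 : fRes k I H U (A ∪ S) = gRes k I H (A ∪ S) := by
      apply fRes_eq_gRes
      rintro ⟨u, hu, h | h⟩
      · exact ne_singleton_of_two (Finset.mem_union_left _ ha.1)
          (Finset.mem_union_left _ hb.1) hab u h
      · exact hne ⟨u, hu, Or.inr h⟩
    have hsub := sum_cut_pair_le ends x hxnn (A := A) (B := S) (C := A ∩ S) (D := A ∪ S)
      (fun a b => xind_submod A S a b)
    have hg := gRes_submod k I H hI hH A S
    have hP1 := hxP.2 _ hcut1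
    have hP2 := hxP.2 _ hcut2
    rw [IsTight] at htA htS
    have hgR : ((gRes k I H A : ℝ) + (gRes k I H S : ℝ))
        ≤ (gRes k I H (A ∩ S) : ℝ) + (gRes k I H (A ∪ S) : ℝ) := by
      exact_mod_cast hg
    rw [hf1] at hP1
    rw [hf2] at hP2
    have hA' : ∑ e ∈ cutEdges ends A, x e = (gRes k I H A : ℝ) := by rw [htA, hfA]
    have hS' : ∑ e ∈ cutEdges ends S, x e = (gRes k I H S : ℝ) := by rw [htS, hfS]
    have ht1 : IsTight k I H U ends x (A ∩ S) := by
      rw [IsTight, hf1]; linarith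
    have ht2 : IsTight k I H U ends x (A ∪ S) := by
      rw [IsTight, hf2]; linarith
    refine ⟨hcut1, hcut2, ht1, ht2, ?_⟩
    apply chi_eq_of_sum_eq ends x hxe (fun a b => xind_submod A S a b)
    linarith
  · -- difference route
    right
    have hcut1 : IsCut (A \ S) := by
      exact ⟨⟨b, Finset.mem_sdiff.mpr hb⟩, ne_univ_of_not_mem (a := d)
        (by rw [Finset.mem_sdiff]; tauto)⟩
    have hcut2 : IsCut (S \ A) := by
      exact ⟨⟨c, Finset.mem_sdiff.mpr hc⟩, ne_univ_of_not_mem (a := d)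
        (by rw [Finset.mem_sdiff]; tauto)⟩
    have hf1 : fRes k I H U (A \ S) = gRes k I H (A \ S) := by
      apply fRes_eq_gRes
      rintro ⟨u, hu, h | h⟩
      · exact hne ⟨u, hu, Or.inl h⟩
      · refine ne_singleton_of_two (a := a) (b := c) ?_ ?_ hac u h <;>
          rw [Finset.mem_compl, Finset.mem_sdiff] <;> tauto
    have hf2 : fRes k I H U (S \ A) = gRes k I H (S \ A) := by
      apply fRes_eq_gRes
      rintro ⟨u, hu, h | h⟩
      · exact hne ⟨u, hu, Or.inr h⟩
      · refine ne_singleton_of_two (a := a) (b := b) ?_ ?_ hab u h <;>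
          rw [Finset.mem_compl, Finset.mem_sdiff] <;> tauto
    have hsub := sum_cut_pair_le ends x hxnn (A := A) (B := S) (C := A \ S) (D := S \ A)
      (fun a b => xind_posimod A S a b)
    have hg := gRes_posimod k I H hI hH A S
    have hP1 := hxP.2 _ hcut1
    have hP2 := hxP.2 _ hcut2
    rw [IsTight] at htA htS
    have hgR : ((gRes k I H A : ℝ) + (gRes k I H S : ℝ))
        ≤ (gRes k I H (A \ S) : ℝ) + (gRes k I H (S \ A) : ℝ) := by
      exact_mod_cast hg
    rw [hf1] at hP1
    rw [hf2] at hP2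
    have hA' : ∑ e ∈ cutEdges ends A, x e = (gRes k I H A : ℝ) := by rw [htA, hfA]
    have hS' : ∑ e ∈ cutEdges ends S, x e = (gRes k I H S : ℝ) := by rw [htS, hfS]
    have ht1 : IsTight k I H U ends x (A \ S) := by
      rw [IsTight, hf1]; linarith
    have ht2 : IsTight k I H U ends x (S \ A) := by
      rw [IsTight, hf2]; linarith
    refine ⟨hcut1, hcut2, ht1, ht2, ?_⟩
    apply chi_eq_of_sum_eq ends x hxe (fun a b => xind_posimod A S a b)
    linarith

lemma fpos_of_tight_chi_ne (k : ℤ) (I H : V → V → ℕ) (U : Finset V) (ends : E → V × V)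
    (x : E → ℝ) (hxe : ∀ e, 0 < x e) {S : Finset V}
    (ht : IsTight k I H U ends x S) (hchi : chiCut ends S ≠ 0) :
    0 < fRes k I H U S := by
  have hne : (cutEdges ends S).Nonempty := by
    by_contra h
    rw [Finset.not_nonempty_iff_eq_empty] at h
    apply hchi
    funext e
    rw [chiCut, h]
    simp
  have hpos : 0 < ∑ e ∈ cutEdges ends S, x e :=
    Finset.sum_pos (fun e _ => hxe e) hne
  rw [IsTight] at ht
  rw [ht] at hpos
  exact_mod_cast hpos

/-- Lemma 4.3: if no laminar `x`-defining family exists for an extreme point `x` of `P`,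
then there are crossing `f`-positive `x`-tight cuts `A`, `B` such that `A ∩ B` or
`V \ (A ∪ B)` is a singleton of `U`, and `A \ B` or `B \ A` is a singleton of `U`. -/
theorem no_laminar_defining_family_gives_crossing_tight_cuts
    (k : ℤ) (I H : V → V → ℕ)
    (hIsymm : ∀ a b, I a b = I b a) (hHsymm : ∀ a b, H a b = H b a)
    (U : Finset V) (ends : E → V × V) [Nonempty E]
    (x : E → ℝ) (hx : x ∈ (polyP k I H U ends).extremePoints ℝ)
    (hxe : ∀ e, 0 < x e ∧ x e < 1)
    (hnolam : ¬ ∃ L : Finset (Finset V), LaminarF L ∧ IsDefining k I H U ends x L) :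
    ∃ A B : Finset V,
      IsCut A ∧ IsCut B ∧
      0 < fRes k I H U A ∧ 0 < fRes k I H U B ∧
      IsTight k I H U ends x A ∧ IsTight k I H U ends x B ∧
      Crosses A B ∧
      (∃ u ∈ U, A ∩ B = {u} ∨ (A ∪ B)ᶜ = {u}) ∧
      (∃ v ∈ U, A \ B = {v} ∨ B \ A = {v}) := by
  classical
  by_contra hmain
  apply hnolam
  obtain ⟨e0⟩ := ‹Nonempty E›
  set r : V := (ends e0).1 with hr
  have hxe' : ∀ e, 0 < x e := fun e => (hxe e).1
  have hxP : x ∈ polyP k I H U ends := hx.1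
  have hchicompl : ∀ S : Finset V, chiCut ends Sᶜ = chiCut ends S := by
    intro S; funext e; rw [chiCut, chiCut, cutEdges_compl]
  have hspan0 := span_tight_eq_top k I H U ends x hx hxe
  set Tr : Set (Finset V) := {S | IsCut S ∧ IsTight k I H U ends x S ∧ r ∉ S} with hTr
  have hspanr : Submodule.span ℝ (chiCut ends '' Tr) = ⊤ := by
    rw [eq_top_iff, ← hspan0]
    apply Submodule.span_le.mpr
    rintro _ ⟨S, ⟨hc, ht⟩, rfl⟩
    by_cases hrS : r ∈ S
    · rw [← hchicompl S]
      apply Submodule.subset_span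
      refine ⟨Sᶜ, ⟨isCut_compl hc, ?_, by simp [hrS]⟩, rfl⟩
      rw [IsTight, cutEdges_compl, fRes_compl k I H hIsymm hHsymm]
      exact ht
    · exact Submodule.subset_span ⟨S, ⟨hc, ht, hrS⟩, rfl⟩
  set Good : Finset (Finset V) → Prop := fun F =>
    (∀ S ∈ F, IsCut S ∧ IsTight k I H U ends x S ∧ r ∉ S) ∧
    LaminarF F ∧
    Set.InjOn (chiCut ends) ↑F ∧
    LinearIndependent ℝ ((↑) : ↥(chiCut ends '' (F : Set (Finset V))) → (E → ℝ)) with hGoodDef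
  have hemp : Good ∅ := by
    refine ⟨by simp, ?_, by simp, ?_⟩
    · intro A hA; simp at hA
    · rw [Finset.coe_empty, Set.image_empty]
      exact linearIndependent_empty ℝ _
  obtain ⟨F, hFmem, hFmax⟩ := Finset.exists_max_image
    ((univ : Finset (Finset (Finset V))).filter Good) Finset.card
    ⟨∅, Finset.mem_filter.mpr ⟨mem_univ _, hemp⟩⟩
  have hFGood : Good F := (Finset.mem_filter.mp hFmem).2
  obtain ⟨hmemF, hlamF, hinjF, hindF⟩ := hFGood
  -- every member has nonzero chi, hence is f-positive
  have hchiFne : ∀ A ∈ F, chiCut ends A ≠ (0 : E → ℝ) := by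
    intro A hA
    exact hindF.ne_zero ⟨chiCut ends A, ⟨A, Finset.mem_coe.mpr hA, rfl⟩⟩
  have hFspan : Submodule.span ℝ (chiCut ends '' (F : Set (Finset V))) = ⊤ := by
    by_contra hFs
    set Cand : Finset (Finset V) := univ.filter (fun S => IsCut S ∧
      IsTight k I H U ends x S ∧ r ∉ S ∧
      chiCut ends S ∉ Submodule.span ℝ (chiCut ends '' (F : Set (Finset V)))) with hCand
    have hCandne : Cand.Nonempty := by
      by_contra hCe
      apply hFs
      rw [eq_top_iff, ← hspanr]
      apply Submodule.span_le.mpr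
      rintro _ ⟨S, ⟨h1, h2, h3⟩, rfl⟩
      by_contra hnot
      rw [Finset.not_nonempty_iff_eq_empty] at hCe
      have : S ∈ Cand := by
        rw [hCand, Finset.mem_filter]
        exact ⟨mem_univ S, h1, h2, h3, hnot⟩
      rw [hCe] at this
      exact absurd this (Finset.notMem_empty S)
    obtain ⟨S0, hS0mem, hS0min⟩ := Finset.exists_min_image Cand
      (fun S => (F.filter (fun B => Crosses B S)).card) hCandne
    rw [hCand, Finset.mem_filter] at hS0mem
    obtain ⟨-, hS0cut, hS0t, hS0r, hS0span⟩ := hS0mem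
    by_cases hcr : (F.filter (fun B => Crosses B S0)).card = 0
    · -- no crossings: insert S0 into F, contradicting maximality
      have hnocross : ∀ B ∈ F, ¬ Crosses B S0 := by
        intro B hB hcross
        have hBm : B ∈ F.filter (fun B => Crosses B S0) :=
          Finset.mem_filter.mpr ⟨hB, hcross⟩
        rw [Finset.card_eq_zero] at hcr
        rw [hcr] at hBm
        exact absurd hBm (Finset.notMem_empty B)
      have hchiS0not : chiCut ends S0 ∉ chiCut ends '' (F : Set (Finset V)) :=
        fun h => hS0span (Submodule.subset_span h)
      have hS0notinF : S0 ∉ F :=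
        fun h => hchiS0not ⟨S0, Finset.mem_coe.mpr h, rfl⟩
      have hGoodins : Good (insert S0 F) := by
        refine ⟨?_, ?_, ?_, ?_⟩
        · intro S hS
          rcases Finset.mem_insert.mp hS with rfl | hS
          · exact ⟨hS0cut, hS0t, hS0r⟩
          · exact hmemF S hS
        · intro A1 hA1 B1 hB1
          rcases Finset.mem_insert.mp hA1 with rfl | hA1' <;>
            rcases Finset.mem_insert.mp hB1 with rfl | hB1'
          · right; left; exact subset_rfl
          · rcases rel_of_not_crosses ((hmemF B1 hB1').2.2) hS0r
              (hnocross B1 hB1') with h | h | h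
            · exact Or.inl h.symm
            · exact Or.inr (Or.inr h)
            · exact Or.inr (Or.inl h)
          · rcases rel_of_not_crosses ((hmemF A1 hA1').2.2) hS0r
              (hnocross A1 hA1') with h | h | h
            · exact Or.inl h
            · exact Or.inr (Or.inl h)
            · exact Or.inr (Or.inr h)
          · exact hlamF A1 hA1' B1 hB1'
        · rw [Finset.coe_insert]
          intro s hs t ht heq
          rcases Set.mem_insert_iff.mp hs with rfl | hs' <;>
            rcases Set.mem_insert_iff.mp ht with rfl | ht'
          · rfl
          · exact absurd ⟨t, ht', heq.symm⟩ hchiS0not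
          · exact absurd ⟨s, hs', heq⟩ hchiS0not
          · exact hinjF hs' ht' heq
        · rw [Finset.coe_insert, Set.image_insert_eq]
          exact LinearIndepOn.id_insert (K := ℝ) (s := chiCut ends '' (F : Set (Finset V))) hindF hS0span
      have hle : (insert S0 F).card ≤ F.card := hFmax _
        (Finset.mem_filter.mpr ⟨mem_univ _, hGoodins⟩)
      rw [Finset.card_insert_of_notMem hS0notinF] at hle
      omega
    · -- S0 crosses some A ∈ F: uncross
      obtain ⟨A, hAF⟩ := Finset.card_pos.mp (Nat.pos_of_ne_zero hcr)
      have hAmem := (Finset.mem_filter.mp hAF).1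
      have hAcross : Crosses A S0 := (Finset.mem_filter.mp hAF).2
      obtain ⟨hAcut, hAt, hAr⟩ := hmemF A hAmem
      have hApos : 0 < fRes k I H U A :=
        fpos_of_tight_chi_ne k I H U ends x hxe' hAt (hchiFne A hAmem)
      have hchiS0ne : chiCut ends S0 ≠ 0 :=
        fun h => hS0span (h ▸ Submodule.zero_mem _)
      have hS0pos : 0 < fRes k I H U S0 :=
        fpos_of_tight_chi_ne k I H U ends x hxe' hS0t hchiS0ne
      have hne : ¬((∃ u ∈ U, A ∩ S0 = {u} ∨ (A ∪ S0)ᶜ = {u}) ∧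
          (∃ v ∈ U, A \ S0 = {v} ∨ S0 \ A = {v})) := by
        rintro ⟨h1, h2⟩
        exact hmain ⟨A, S0, hAcut, hS0cut, hApos, hS0pos, hAt, hS0t, hAcross, h1, h2⟩
      have hAspanmem : chiCut ends A ∈
          Submodule.span ℝ (chiCut ends '' (F : Set (Finset V))) :=
        Submodule.subset_span ⟨A, Finset.mem_coe.mpr hAmem, rfl⟩
      have hfinal : ∀ X : Finset V, IsCut X → IsTight k I H U ends x X → r ∉ X →
          chiCut ends X ∉ Submodule.span ℝ (chiCut ends '' (F : Set (Finset V))) →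
          (∀ B : Finset V, (Disjoint B A ∨ B ⊆ A ∨ A ⊆ B) →
            (Disjoint B S0 ∨ B ⊆ S0 ∨ S0 ⊆ B) →
            (Disjoint B X ∨ B ⊆ X ∨ X ⊆ B)) →
          (Disjoint A X ∨ A ⊆ X ∨ X ⊆ A) → False := by
        intro X hXcut hXt hXr hXspan hXrel hAX
        have hsubset : F.filter (fun B => Crosses B X) ⊆
            (F.filter (fun B => Crosses B S0)).erase A := by
          intro B hB
          obtain ⟨hBF, hBX⟩ := Finset.mem_filter.mp hB
          have hBA := hlamF B hBF A hAmem
          have hBne : B ≠ A := by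
            rintro rfl
            exact not_crosses_of_rel hAX hBX
          have hBS0 : Crosses B S0 := by
            by_contra hn
            exact not_crosses_of_rel
              (hXrel B hBA (rel_of_not_crosses ((hmemF B hBF).2.2) hS0r hn)) hBX
          exact Finset.mem_erase.mpr ⟨hBne, Finset.mem_filter.mpr ⟨hBF, hBS0⟩⟩
        have hlt : (F.filter (fun B => Crosses B X)).card <
            (F.filter (fun B => Crosses B S0)).card :=
          lt_of_le_of_lt (Finset.card_le_card hsubset)
            (Finset.card_erase_lt_of_mem (Finset.mem_filter.mpr ⟨hAmem, hAcross⟩))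
        have hmin := hS0min X (by
          rw [hCand, Finset.mem_filter]
          exact ⟨mem_univ X, hXcut, hXt, hXr, hXspan⟩)
        omega
      rcases uncross_step k I H hIsymm hHsymm U ends x hxP hxe' hAcross hAt hS0t hne with
        ⟨hc1, hc2, ht1, ht2, hchi⟩ | ⟨hc1, hc2, ht1, ht2, hchi⟩
      · have hone : chiCut ends (A ∩ S0) ∉
            Submodule.span ℝ (chiCut ends '' (F : Set (Finset V))) ∨
            chiCut ends (A ∪ S0) ∉
            Submodule.span ℝ (chiCut ends '' (F : Set (Finset V))) := by
          by_contra hn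
          push_neg at hn
          apply hS0span
          have hrepr : chiCut ends S0 = fun e =>
              chiCut ends (A ∩ S0) e + chiCut ends (A ∪ S0) e - chiCut ends A e := by
            funext e
            have := hchi e
            linarith
          rw [hrepr]
          exact Submodule.sub_mem _ (Submodule.add_mem _ hn.1 hn.2) hAspanmem
        rcases hone with h | h
        · refine hfinal (A ∩ S0) hc1 ht1 ?_ h
            (fun B hBA hBS0 => (rel_uncross hAcross hBA hBS0).1)
            (Or.inr (Or.inr Finset.inter_subset_left))
          intro hrm
          exact hAr (Finset.mem_inter.mp hrm).1
        · refine hfinal (A ∪ S0) hc2 ht2 ?_ h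
            (fun B hBA hBS0 => (rel_uncross hAcross hBA hBS0).2.1)
            (Or.inr (Or.inl Finset.subset_union_left))
          intro hrm
          rcases Finset.mem_union.mp hrm with h' | h'
          · exact hAr h'
          · exact hS0r h'
      · have hone : chiCut ends (A \ S0) ∉
            Submodule.span ℝ (chiCut ends '' (F : Set (Finset V))) ∨
            chiCut ends (S0 \ A) ∉
            Submodule.span ℝ (chiCut ends '' (F : Set (Finset V))) := by
          by_contra hn
          push_neg at hn
          apply hS0span
          have hrepr : chiCut ends S0 = fun e =>
              chiCut ends (A \ S0) e + chiCut ends (S0 \ A) e - chiCut ends A e := by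
            funext e
            have := hchi e
            linarith
          rw [hrepr]
          exact Submodule.sub_mem _ (Submodule.add_mem _ hn.1 hn.2) hAspanmem
        rcases hone with h | h
        · refine hfinal (A \ S0) hc1 ht1 ?_ h
            (fun B hBA hBS0 => (rel_uncross hAcross hBA hBS0).2.2.1)
            (Or.inr (Or.inr Finset.sdiff_subset))
          intro hrm
          exact hAr (Finset.mem_sdiff.mp hrm).1
        · refine hfinal (S0 \ A) hc2 ht2 ?_ h
            (fun B hBA hBS0 => (rel_uncross hAcross hBA hBS0).2.2.2)
            (Or.inl Finset.disjoint_sdiff)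
          intro hrm
          exact hS0r (Finset.mem_sdiff.mp hrm).1
  -- conclude: F is a laminar defining family
  refine ⟨F, hlamF, ?_, ?_, ?_⟩
  · intro S hS
    obtain ⟨hc, ht, -⟩ := hmemF S hS
    exact ⟨hc, fpos_of_tight_chi_ne k I H U ends x hxe' ht (hchiFne S hS), ht⟩
  · -- cardinality
    have hinj' : Set.InjOn (chiCut ends) ↑F := hinjF
    have hcardimg : (F.image (chiCut ends)).card = F.card :=
      Finset.card_image_of_injOn hinj'
    have hindimg : LinearIndependent ℝ
        ((↑) : ↥((F.image (chiCut ends) : Finset (E → ℝ)) : Set (E → ℝ)) → (E → ℝ)) := by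
      rw [Finset.coe_image]
      exact hindF
    have hfr := finrank_span_finset_eq_card hindimg
    rw [Finset.coe_image, hFspan] at hfr
    rw [finrank_top, Module.finrank_pi] at hfr
    omega
  · exact (linearIndepOn_iff_image hinjF).mpr hindF
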